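/- Let X be a normed space, let C₀ be a nonempty closed convex subset of X, let H = {C ∈ Conv_H(X) : d_H(C, C₀) < ∞} be the metric component of C₀, and let Z be a closed linear subspace of X with Z ⊆ V_{C₀}. Let q : X → X/Z be the quotient map. Then the map C ↦ q(C) is a bijective isometry from H onto the metric component {D ∈ Conv_H(X/Z) : d_H(D, q(C₀)) < ∞} of q(C₀) in Conv_H(X/Z). -/

import Mathlib

open EMetric Metric Set
open scoped ENNReal NNReal

section Aux

variable {X : Type*} [NormedAddCommGroup X] [NormedSpace ℝ X] (Z : Submodule ℝ X)

lemma mkQ_lipschitz : LipschitzWith 1 (Z.mkQ) := by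
  refine LipschitzWith.of_dist_le_mul fun x y => ?_
  simp only [NNReal.coe_one, one_mul, dist_eq_norm, ← map_sub]
  exact Submodule.Quotient.norm_mk_le _ _

/-- If `B` is saturated under `Z`, then the quotient map preserves `infEdist`. -/
lemma infEdist_mk (B : Set X) (hsat : ∀ b ∈ B, ∀ z ∈ Z, b + z ∈ B) (a : X) :
    infEDist (Z.mkQ a) (Z.mkQ '' B) = infEDist a B := by
  refine le_antisymm ?_ ?_
  · refine le_infEdist.2 fun b hb => ?_
    calc infEdist (Z.mkQ a) (Z.mkQ '' B) ≤ edist (Z.mkQ a) (Z.mkQ b) :=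
          infEdist_le_edist_of_mem ⟨b, hb, rfl⟩
      _ ≤ edist a b := (mkQ_lipschitz Z).edist_le_mul a b |>.trans (by simp)
  · refine ENNReal.le_of_forall_pos_le_add fun ε hε hfin => ?_
    have hε2 : ((ε : ℝ≥0∞) / 2) ≠ 0 := by
      simp [ENNReal.div_eq_zero_iff, hε.ne']
    have h1 : infEdist (Z.mkQ a) (Z.mkQ '' B) <
        infEdist (Z.mkQ a) (Z.mkQ '' B) + ε / 2 :=
      ENNReal.lt_add_right hfin.ne hε2
    obtain ⟨y, ⟨b, hb, rfl⟩, hy⟩ := infEdist_lt_iff.1 h1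
    have hε2' : (0 : ℝ) < (ε : ℝ) / 2 := by positivity
    obtain ⟨m, hm, hmn⟩ := Submodule.Quotient.norm_mk_lt (Z.mkQ (a - b)) hε2'
    have hmem : a - b - m ∈ Z := by
      rw [← Submodule.Quotient.eq]
      exact hm.symm
    have hb' : b + (a - b - m) ∈ B := hsat b hb _ hmem
    have hab : a - (b + (a - b - m)) = m := by abel
    calc infEdist a B ≤ edist a (b + (a - b - m)) := infEdist_le_edist_of_mem hb'
      _ = ENNReal.ofReal ‖m‖ := by rw [edist_dist, dist_eq_norm, hab]
      _ ≤ ENNReal.ofReal (‖Z.mkQ (a - b)‖ + (ε : ℝ) / 2) := by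
          exact ENNReal.ofReal_le_ofReal hmn.le
      _ = ENNReal.ofReal ‖Z.mkQ (a - b)‖ + ENNReal.ofReal ((ε : ℝ) / 2) := by
          rw [ENNReal.ofReal_add (norm_nonneg _) hε2'.le]
      _ = edist (Z.mkQ a) (Z.mkQ b) + ε / 2 := by
          rw [edist_dist, dist_eq_norm, ← map_sub]
          congr 1
          rw [ENNReal.ofReal_div_of_pos (by norm_num)]
          simp
      _ ≤ (infEdist (Z.mkQ a) (Z.mkQ '' B) + ε / 2) + ε / 2 := by exact add_le_add_left hy.le _
      _ = infEdist (Z.mkQ a) (Z.mkQ '' B) + ε := by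
          rw [add_assoc, ENNReal.add_halves]

/-- For saturated sets, the quotient map preserves the Hausdorff edistance. -/
lemma hausdorffEdist_mk (A B : Set X)
    (hA : ∀ a ∈ A, ∀ z ∈ Z, a + z ∈ A) (hB : ∀ b ∈ B, ∀ z ∈ Z, b + z ∈ B) :
    hausdorffEdist (Z.mkQ '' A) (Z.mkQ '' B) = hausdorffEdist A B := by
  refine le_antisymm ?_ ?_
  · refine hausdorffEdist_le_of_infEdist ?_ ?_
    · rintro x ⟨a, ha, rfl⟩
      rw [infEdist_mk Z B hB]
      exact infEdist_le_hausdorffEdist_of_mem ha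
    · rintro x ⟨b, hb, rfl⟩
      rw [infEdist_mk Z A hA, show hausdorffEdist A B = hausdorffEdist B A from hausdorffEdist_comm]
      exact infEdist_le_hausdorffEdist_of_mem hb
  · refine hausdorffEdist_le_of_infEdist ?_ ?_
    · intro a ha
      rw [← infEdist_mk Z B hB]
      exact infEdist_le_hausdorffEdist_of_mem ⟨a, ha, rfl⟩
    · intro b hb
      rw [← infEdist_mk Z A hA, show hausdorffEdist (Z.mkQ '' A) (Z.mkQ '' B) = hausdorffEdist (Z.mkQ '' B) (Z.mkQ '' A) from hausdorffEdist_comm]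
      exact infEdist_le_hausdorffEdist_of_mem ⟨b, hb, rfl⟩

/-- The image of a closed saturated set is closed. -/
lemma isClosed_mk_image (C : Set X) (hC : IsClosed C)
    (hsat : ∀ c ∈ C, ∀ z ∈ Z, c + z ∈ C) : IsClosed (Z.mkQ '' C) := by
  refine isClosed_of_closure_subset fun x hx => ?_
  obtain ⟨a, rfl⟩ := Z.mkQ_surjective x
  rw [mem_closure_iff_infEdist_zero, infEdist_mk Z C hsat,
    ← mem_closure_iff_infEdist_zero] at hx
  exact ⟨a, hC.closure_subset hx, rfl⟩

end Aux

/-- Let `Z` be a closed linear subspace of a normed space `X` contained in the characteristic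
cone `V_{C₀}` of a nonempty closed convex set `C₀ ⊆ X`, and let `q : X → X/Z` be the quotient
map. Then `C ↦ q(C)` is a bijective isometry from the metric component
`H = {C : d_H(C, C₀) < ∞}` of `C₀` in `Conv_H(X)` onto the metric component of `q(C₀)` in
`Conv_H(X/Z)`. -/
theorem quotient_isometry_of_metric_components
    {X : Type*} [NormedAddCommGroup X] [NormedSpace ℝ X]
    (Z : Submodule ℝ X) (hZ : IsClosed (Z : Set X))
    (C₀ : Set X) (hne : C₀.Nonempty) (hcl : IsClosed C₀) (hco : Convex ℝ C₀)
    (hZC : ∀ z ∈ Z, ∀ c ∈ C₀, ∀ t : ℝ, 0 ≤ t → c + t • z ∈ C₀) :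
    ∃ Φ : {C : Set X // C.Nonempty ∧ IsClosed C ∧ Convex ℝ C ∧
            EMetric.hausdorffEdist C C₀ < ⊤} →
          {D : Set (X ⧸ Z) // D.Nonempty ∧ IsClosed D ∧ Convex ℝ D ∧
            EMetric.hausdorffEdist D (Z.mkQ '' C₀) < ⊤},
      Function.Bijective Φ ∧
      (∀ C, (Φ C : Set (X ⧸ Z))  = Z.mkQ '' (C : Set X)) ∧
      (∀ C C', EMetric.hausdorffEdist (Φ C : Set (X ⧸ Z)) (Φ C' : Set (X ⧸ Z)) =
        EMetric.hausdorffEdist (C : Set X) (C' : Set X)) := by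
  -- `C₀` is saturated under `Z`
  have hsat₀ : ∀ c ∈ C₀, ∀ z ∈ Z, c + z ∈ C₀ := by
    intro c hc z hz
    simpa using hZC z hz c hc 1 zero_le_one
  -- any member of the metric component is saturated under `Z`
  have hsat : ∀ (C : Set X), IsClosed C → Convex ℝ C →
      EMetric.hausdorffEdist C C₀ < ⊤ → ∀ c ∈ C, ∀ z ∈ Z, c + z ∈ C := by
    intro C hCc hCco hfin c hc z hz
    have hfin' : EMetric.hausdorffEdist C C₀ ≠ ⊤ := hfin.ne
    have hCne : C.Nonempty := ⟨c, hc⟩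
    set r := Metric.hausdorffDist C C₀ with hr
    -- a uniform bound on `infDist (c + n • z) C`
    have hbound : ∀ n : ℕ, Metric.infDist (c + (n : ℝ) • z) C ≤ 2 * r + 1 := by
      intro n
      obtain ⟨c₀, hc₀, hd⟩ : ∃ c₀ ∈ C₀, dist c c₀ < r + 1 := by
        have h1 : Metric.infDist c C₀ ≤ r := Metric.infDist_le_hausdorffDist_of_mem hc hfin'
        have h2 : Metric.infDist c C₀ < r + 1 := lt_of_le_of_lt h1 (by linarith)
        exact (Metric.infDist_lt_iff hne).1 h2
      have hc₀n : c₀ + (n : ℝ) • z ∈ C₀ := hZC z hz c₀ hc₀ n (Nat.cast_nonneg n)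
      have h3 : Metric.infDist (c + (n : ℝ) • z) C₀ ≤ r + 1 := by
        refine le_trans (Metric.infDist_le_dist_of_mem hc₀n) ?_
        rw [dist_eq_norm]
        have : c + (n : ℝ) • z - (c₀ + (n : ℝ) • z) = c - c₀ := by abel
        rw [this, ← dist_eq_norm]
        exact hd.le
      have h4 : Metric.infDist (c + (n : ℝ) • z) C ≤
          Metric.infDist (c + (n : ℝ) • z) C₀ + Metric.hausdorffDist C₀ C :=
        Metric.infDist_le_infDist_add_hausdorffDist (by rwa [EMetric.hausdorffEdist_comm])
      have h5 : Metric.hausdorffDist C₀ C = r := Metric.hausdorffDist_comm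
      linarith
    -- conclude `c + z ∈ C` using convexity
    have key : ∀ n : ℕ, 1 ≤ n → Metric.infDist (c + z) C ≤ (2 * r + 2) / n := by
      intro n hn
      have hnpos : (0 : ℝ) < n := by exact_mod_cast hn
      obtain ⟨x, hx, hdx⟩ : ∃ x ∈ C, dist (c + (n : ℝ) • z) x < 2 * r + 2 := by
        have := hbound n
        exact (Metric.infDist_lt_iff hCne).1 (lt_of_le_of_lt this (by linarith))
      have hp : (1 - (n : ℝ)⁻¹) • c + (n : ℝ)⁻¹ • x ∈ C := by
        refine hCco hc hx ?_ ?_ (by ring)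
        · have : (n : ℝ)⁻¹ ≤ 1 := by
            rw [inv_le_one_iff₀]; right; exact_mod_cast hn
          linarith
        · positivity
      refine le_trans (Metric.infDist_le_dist_of_mem hp) ?_
      rw [dist_eq_norm]
      have heq : c + z - ((1 - (n : ℝ)⁻¹) • c + (n : ℝ)⁻¹ • x)
          = (n : ℝ)⁻¹ • (c + (n : ℝ) • z - x) := by
        rw [smul_sub, smul_add, smul_smul, inv_mul_cancel₀ hnpos.ne', one_smul]
        rw [sub_smul, one_smul]
        abel
      rw [heq, norm_smul, norm_inv, Real.norm_natCast, div_eq_inv_mul]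
      have hnorm : ‖c + (n : ℝ) • z - x‖ ≤ 2 * r + 2 := by
        rw [← dist_eq_norm]; exact hdx.le
      exact mul_le_mul_of_nonneg_left hnorm (inv_nonneg.2 hnpos.le)
    have hzero : Metric.infDist (c + z) C = 0 := by
      by_contra h
      have hpos : 0 < Metric.infDist (c + z) C :=
        lt_of_le_of_ne (Metric.infDist_nonneg) (Ne.symm h)
      obtain ⟨n, hn⟩ := exists_nat_gt ((2 * r + 2) / Metric.infDist (c + z) C)
      have hn1 : 1 ≤ n := by
        by_contra h'
        push_neg at h'
        interval_cases n
        · simp only [Nat.cast_zero] at hn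
          have h0 : (0:ℝ) ≤ 2 * r + 2 := by
            have : (0:ℝ) ≤ r := Metric.hausdorffDist_nonneg
            linarith
          exact absurd hn (not_lt.2 (div_nonneg h0 hpos.le))
      have := key n hn1
      have hnpos : (0 : ℝ) < n := by exact_mod_cast hn1
      rw [div_lt_iff₀ hpos] at hn
      rw [le_div_iff₀ hnpos] at this
      nlinarith
    have : c + z ∈ closure C := by
      rw [Metric.mem_closure_iff_infDist_zero hCne]; exact hzero
    exact hCc.closure_subset this
  -- the forward map
  refine ⟨fun C => ⟨Z.mkQ '' (C : Set X), ?_, ?_, ?_, ?_⟩, ?_, ?_, ?_⟩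
  · exact C.2.1.image _
  · exact isClosed_mk_image Z C C.2.2.1 (hsat C C.2.2.1 C.2.2.2.1 C.2.2.2.2)
  · exact C.2.2.2.1.linear_image Z.mkQ
  · rw [hausdorffEdist_mk Z C C₀ (hsat C C.2.2.1 C.2.2.2.1 C.2.2.2.2) hsat₀]
    exact C.2.2.2.2
  · constructor
    · -- injective
      rintro ⟨A, hA⟩ ⟨B, hB⟩ h
      simp only [Subtype.mk.injEq] at h ⊢
      have hAs := hsat A hA.2.1 hA.2.2.1 hA.2.2.2
      have hBs := hsat B hB.2.1 hB.2.2.1 hB.2.2.2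
      have main : ∀ (A B : Set X), (∀ b ∈ B, ∀ z ∈ Z, b + z ∈ B) →
          Z.mkQ '' A = Z.mkQ '' B → A ⊆ B := by
        intro A B hBsat him a ha
        have : Z.mkQ a ∈ Z.mkQ '' B := him ▸ ⟨a, ha, rfl⟩
        obtain ⟨b, hb, hba⟩ := this
        have : a - b ∈ Z := by
          rw [← Submodule.Quotient.eq]
          exact hba.symm
        have := hBsat b hb _ this
        simpa using this
      exact subset_antisymm (main A B hBs h) (main B A hAs h.symm)
    · -- surjective
      rintro ⟨D, hDne, hDcl, hDco, hDfin⟩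
      set C : Set X := Z.mkQ ⁻¹' D with hCdef
      have hCsat : ∀ c ∈ C, ∀ z ∈ Z, c + z ∈ C := by
        intro c hc z hz
        simp only [hCdef, mem_preimage, map_add] at hc ⊢
        have hz0 : Z.mkQ z = 0 := by
          rwa [Submodule.mkQ_apply, Submodule.Quotient.mk_eq_zero]
        rw [hz0, add_zero]
        exact hc
      have himg : Z.mkQ '' C = D := Set.image_preimage_eq D (Z.mkQ_surjective)
      have hCne : C.Nonempty := by
        obtain ⟨d, hd⟩ := hDne
        obtain ⟨a, rfl⟩ := Z.mkQ_surjective d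
        exact ⟨a, hd⟩
      have hCcl : IsClosed C := hDcl.preimage (mkQ_lipschitz Z).continuous
      have hCco : Convex ℝ C := hDco.linear_preimage Z.mkQ
      have hCfin : EMetric.hausdorffEdist C C₀ < ⊤ := by
        rw [← hausdorffEdist_mk Z C C₀ hCsat hsat₀, himg]
        exact hDfin
      exact ⟨⟨C, hCne, hCcl, hCco, hCfin⟩, Subtype.ext himg⟩
  · intro C; rfl
  · intro C C'
    exact hausdorffEdist_mk Z C C' (hsat C C.2.2.1 C.2.2.2.1 C.2.2.2.2)
      (hsat C' C'.2.2.1 C'.2.2.2.1 C'.2.2.2.2)
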